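/- The map sending each hereditarily finite set to its ordered snake is injective: two hereditarily finite sets with the same ordered snake representation are equal. -/

import Mathlib

inductive AB | a | b
deriving DecidableEq

/-- The strict ordering on the alphabet: `a < b`. -/
def abLT : AB → AB → Prop := fun x y => x = AB.a ∧ y = AB.b

/-- Lexicographic strict order `≪` on strings over `{a,b}`. -/
def lexLT : List AB → List AB → Prop := List.Lex abLT

/-- The graph of the map sending a hereditarily finite set to its ordered snake
(snakes identified with strings in Polish notation over `{a,b}`):
`∅` is sent to the string `a`; a set `{S₁,…,Sₖ}` with the `Sᵢ` pairwise distinct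
and their ordered snakes listed in strictly increasing lexicographic order
`β₁ ≪ … ≪ βₖ` is sent to `bᵏa β₁ … βₖ`. -/
inductive OSnake : ZFSet → List AB → Prop
  | empty : OSnake ∅ [AB.a]
  | insert (l : List ZFSet) (βs : List (List AB)) :
      l ≠ [] →
      l.Pairwise (· ≠ ·) →
      List.Forall₂ OSnake l βs →
      βs.Chain' lexLT →
      OSnake (l.foldr (insert : ZFSet → ZFSet → ZFSet) ∅)
        (List.replicate l.length AB.b ++ [AB.a] ++ βs.flatten)

namespace SnakeAux

universe u v

/-- The "excess" of a string: number of `a`s minus number of `b`s, as an integer. -/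
def e (l : List AB) : ℤ := (l.map fun x => if x = AB.a then (1 : ℤ) else -1).sum

lemma e_nil : e [] = 0 := rfl

lemma e_append (x y : List AB) : e (x ++ y) = e x + e y := by
  simp [e]

lemma e_replicate_b (k : ℕ) : e (List.replicate k AB.b) = -(k : ℤ) := by
  induction k with
  | zero => simp [e]
  | succ n ih =>
    rw [List.replicate_succ, show (AB.b :: List.replicate n AB.b) = [AB.b] ++ List.replicate n AB.b from rfl, e_append, ih]
    have : e [AB.b] = -1 := by simp [e]
    rw [this]
    push_cast
    ring

lemma e_single_a : e [AB.a] = 1 := by simp [e]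

lemma e_flatten (L : List (List AB)) : e L.flatten = (L.map e).sum := by
  induction L with
  | nil => simp [e]
  | cons x xs ih => simp [List.flatten_cons, e_append, ih]

/-- Prefix of an append decomposes. -/
lemma prefix_append_cases {p x y : List AB} (h : p <+: x ++ y) :
    p <+: x ∨ ∃ q, p = x ++ q ∧ q <+: y := by
  rcases h with ⟨t, ht⟩
  by_cases hl : p.length ≤ x.length
  · left
    have : p = (x ++ y).take p.length := by
      rw [← ht, List.take_left' rfl]
    rw [List.take_append_of_le_length hl] at this
    exact this ▸ List.take_prefix _ _
  · right
    refine ⟨p.drop x.length, ?_, ?_⟩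
    · have hx : x = p.take x.length := by
        have : x = (p ++ t).take x.length := by
          rw [ht, List.take_left' rfl]
        rwa [List.take_append_of_le_length (le_of_lt (not_le.1 hl))] at this
      conv_lhs => rw [← List.take_append_drop x.length p, ← hx]
    · have : p.drop x.length ++ t = y := by
        have := congrArg (List.drop x.length) ht
        rwa [List.drop_append_of_le_length (le_of_lt (not_le.1 hl)), List.drop_left] at this
      exact ⟨t, this⟩

/-- From `Forall₂ OSnake l βs`, every member of `βs` is the snake of some set. -/
lemma mem_of_forall₂ {l : List ZFSet.{u}} {βs : List (List AB)}
    (h : List.Forall₂ OSnake l βs) : ∀ β ∈ βs, ∃ S : ZFSet.{u}, OSnake S β := by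
  induction h with
  | nil => simp
  | cons hrel _ ih =>
    intro β hβ
    rw [List.mem_cons] at hβ
    rcases hβ with rfl | hβ
    · exact ⟨_, hrel⟩
    · exact ih β hβ

lemma length_lt_of_mem {βs : List (List AB)} {β : List AB} (hβ : β ∈ βs)
    {k : ℕ} (hk : 1 ≤ k) :
    β.length < (List.replicate k AB.b ++ [AB.a] ++ βs.flatten).length := by
  have h1 : β.length ≤ βs.flatten.length :=
    (List.sublist_flatten_of_mem hβ).length_le
  simp only [List.length_append, List.length_replicate, List.length_cons, List.length_nil]
  omega

/-- Every snake has excess 1. -/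
lemma e_snake : ∀ (n : ℕ) (α : List AB), α.length = n → ∀ S, OSnake S α → e α = 1 := by
  intro n
  induction n using Nat.strong_induction_on with
  | _ n ih =>
    intro α hlen S hS
    cases hS with
    | empty => exact e_single_a
    | insert l βs hne hpw hf hch =>
      have hk : 1 ≤ l.length := List.length_pos_iff.2 hne
      have hall : ∀ β ∈ βs, e β = 1 := by
        intro β hβ
        obtain ⟨S', hS'⟩ := mem_of_forall₂ hf β hβ
        exact ih β.length (hlen ▸ length_lt_of_mem hβ hk) β rfl S' hS'
      have hlen2 : βs.length = l.length := (List.Forall₂.length_eq hf).symm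
      rw [e_append, e_append, e_replicate_b, e_single_a, e_flatten,
        List.map_congr_left hall]
      simp [hlen2]

/-- Every proper prefix of a snake has excess `≤ 0`. -/
lemma e_prefix : ∀ (n : ℕ) (α : List AB), α.length = n → ∀ S, OSnake S α →
    ∀ p, p <+: α → p ≠ α → e p ≤ 0 := by
  intro n
  induction n using Nat.strong_induction_on with
  | _ n ih =>
    intro α hlen S hS p hp hne
    cases hS with
    | empty =>
      rcases hp with ⟨t, ht⟩
      rcases p with _ | ⟨x, p⟩
      · simp [e_nil]
      · exfalso
        apply hne
        simp at ht
        simp [ht.1, ht.2.1]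
    | insert l βs hnel hpw hf hch =>
      have hk : 1 ≤ l.length := List.length_pos_iff.2 hnel
      set k := l.length with hkdef
      -- key fact about prefixes of flatten βs
      have hβfacts : ∀ β ∈ βs, e β = 1 ∧ ∀ q, q <+: β → q ≠ β → e q ≤ 0 := by
        intro β hβ
        obtain ⟨S', hS'⟩ := mem_of_forall₂ hf β hβ
        refine ⟨e_snake β.length β rfl S' hS', ?_⟩
        intro q hq hqne
        exact ih β.length (hlen ▸ length_lt_of_mem hβ hk) β rfl S' hS' q hq hqne
      have hflat : ∀ (γs : List (List AB)),
          (∀ β ∈ γs, e β = 1 ∧ ∀ q, q <+: β → q ≠ β → e q ≤ 0) →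
          ∀ q, q <+: γs.flatten →
            e q ≤ γs.length ∧ (e q = γs.length → q = γs.flatten) := by
        intro γs
        induction γs with
        | nil =>
          intro _ q hq
          rw [List.flatten_nil, List.prefix_nil] at hq
          subst hq
          simp [e_nil]
        | cons β rest ihr =>
          intro hfacts q hq
          rw [List.flatten_cons] at hq
          have hβ := hfacts β List.mem_cons_self
          have hrest : ∀ b ∈ rest, e b = 1 ∧ ∀ q, q <+: b → q ≠ b → e q ≤ 0 :=
            fun b hb => hfacts b (List.mem_cons_of_mem _ hb)
          rcases prefix_append_cases hq with h1 | ⟨q', rfl, hq'⟩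
          · by_cases heq : q = β
            · subst heq
              constructor
              · rw [hβ.1]
                simp only [List.length_cons]
                push_cast
                omega
              · intro hE
                rw [hβ.1] at hE
                simp only [List.length_cons] at hE
                push_cast at hE
                have hr0 : rest.length = 0 := by omega
                rw [List.length_eq_zero_iff] at hr0
                subst hr0
                simp
            · have := hβ.2 q h1 heq
              constructor
              · simp only [List.length_cons]
                push_cast
                omega
              · intro hE
                exfalso
                simp only [List.length_cons] at hE
                push_cast at hE
                omega
          · obtain ⟨h1, h2⟩ := ihr hrest q' hq'
            rw [e_append, hβ.1]
            constructor
            · simp only [List.length_cons]; push_cast; omega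
            · intro hE
              simp only [List.length_cons] at hE
              push_cast at hE
              have : e q' = rest.length := by omega
              rw [h2 this, List.flatten_cons]
      -- now decompose p
      rw [List.append_assoc] at hp
      rcases prefix_append_cases hp with h1 | ⟨q, rfl, hq⟩
      · -- prefix of replicate k b : it is replicate of shorter length
        have : p = List.replicate p.length AB.b := by
          rcases h1 with ⟨t, ht⟩
          have := List.eq_replicate_of_mem (l := p) (a := AB.b) ?_
          · rw [← this]
          · intro x hx
            have : x ∈ List.replicate k AB.b := by
              rw [← ht]; exact List.mem_append_left _ hx
            exact List.eq_of_mem_replicate this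
        rw [this, e_replicate_b]
        omega
      · rcases prefix_append_cases hq with h1 | ⟨q', rfl, hq'⟩
        · -- q prefix of [a]
          rcases h1 with ⟨t, ht⟩
          rcases q with _ | ⟨x, q⟩
          · rw [e_append, e_replicate_b, e_nil]; omega
          · simp at ht
            obtain ⟨rfl, rfl, rfl⟩ := ht
            rw [e_append, e_replicate_b, e_single_a]
            omega
        · -- p = replicate ++ [a] ++ q', q' proper prefix of flatten
          have hq'ne : q' ≠ βs.flatten := by
            intro h
            apply hne
            rw [h, List.append_assoc]
          obtain ⟨hle, heq⟩ := hflat βs hβfacts q' hq'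
          have hlenβs : βs.length = k := (List.Forall₂.length_eq hf).symm
          have hstrict : e q' ≤ (βs.length : ℤ) - 1 := by
            rcases lt_or_eq_of_le hle with h | h
            · omega
            · exact absurd (heq h) hq'ne
          rw [e_append, e_append, e_replicate_b, e_single_a]
          rw [hlenβs] at hstrict
          omega

/-- No snake is a proper prefix of another: prefix implies equality. -/
lemma snake_prefix_free {S : ZFSet.{u}} {T : ZFSet.{v}} {α γ : List AB}
    (hS : OSnake S α) (hT : OSnake T γ) (h : α <+: γ) : α = γ := by
  by_contra hne
  have h1 := e_snake α.length α rfl S hS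
  have h2 := e_prefix γ.length γ rfl T hT α h hne
  omega

/-- Decoding `replicate k b ++ a :: r`. -/
lemma replicate_a_inj : ∀ (k k' : ℕ) (r r' : List AB),
    List.replicate k AB.b ++ AB.a :: r = List.replicate k' AB.b ++ AB.a :: r' →
    k = k' ∧ r = r' := by
  intro k
  induction k with
  | zero =>
    intro k' r r' h
    cases k' with
    | zero => simpa using h
    | succ m => simp [List.replicate_succ] at h
  | succ m ih =>
    intro k' r r' h
    cases k' with
    | zero => simp [List.replicate_succ] at h
    | succ m' =>
      simp only [List.replicate_succ, List.cons_append, List.cons.injEq] at h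
      obtain ⟨h1, h2⟩ := ih m' r r' h.2
      exact ⟨by omega, h2⟩

/-- Unique decoding of concatenated snakes. -/
lemma flatten_inj : ∀ (βs βs' : List (List AB)),
    (∀ β ∈ βs, ∃ S : ZFSet.{u}, OSnake S β) → (∀ β ∈ βs', ∃ S : ZFSet.{u}, OSnake S β) →
    βs.length = βs'.length → βs.flatten = βs'.flatten → βs = βs' := by
  intro βs
  induction βs with
  | nil =>
    intro βs' _ _ hlen _
    cases βs' with
    | nil => rfl
    | cons _ _ => simp at hlen
  | cons β rest ih =>
    intro βs' hfa hfa' hlen hflat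
    cases βs' with
    | nil => simp at hlen
    | cons β' rest' =>
      obtain ⟨S, hS⟩ := hfa β List.mem_cons_self
      obtain ⟨S', hS'⟩ := hfa' β' List.mem_cons_self
      rw [List.flatten_cons, List.flatten_cons] at hflat
      have hp : β <+: β' ++ rest'.flatten := ⟨rest.flatten, hflat⟩
      have hp' : β' <+: β' ++ rest'.flatten := List.prefix_append _ _
      have hββ' : β = β' := by
        rcases List.prefix_or_prefix_of_prefix hp hp' with h | h
        · exact snake_prefix_free hS hS' h
        · exact (snake_prefix_free hS' hS h).symm
      subst hββ'
      have hrest : rest.flatten = rest'.flatten := List.append_cancel_left hflat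
      have := ih rest' (fun b hb => hfa b (List.mem_cons_of_mem _ hb))
        (fun b hb => hfa' b (List.mem_cons_of_mem _ hb))
        (by simpa using hlen) hrest
      rw [this]



lemma osnake_inv {T : ZFSet.{u}} {α : List AB} (h : OSnake T α) :
    (α = [AB.a] ∧ T = ∅) ∨
    ∃ l βs, l ≠ [] ∧ List.Forall₂ OSnake l βs ∧
      T = l.foldr (insert : ZFSet → ZFSet → ZFSet) ∅ ∧
      α = List.replicate l.length AB.b ++ [AB.a] ++ βs.flatten := by
  cases h with
  | empty => exact Or.inl ⟨rfl, rfl⟩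
  | insert l βs h1 h2 h3 h4 => exact Or.inr ⟨l, βs, h1, h3, rfl, rfl⟩

lemma forall₂_unique : ∀ (βs : List (List AB)) (l l' : List ZFSet.{u}),
    List.Forall₂ OSnake l βs → List.Forall₂ OSnake l' βs →
    (∀ β ∈ βs, ∀ S T : ZFSet.{u}, OSnake S β → OSnake T β → S = T) → l = l' := by
  intro βs
  induction βs with
  | nil =>
    intro l l' h h' _
    cases h; cases h'; rfl
  | cons β rest ih =>
    intro l l' h h' hIH
    cases h with
    | cons hrel hrest =>
      cases h' with
      | cons hrel' hrest' =>
        have h1 := hIH β List.mem_cons_self _ _ hrel hrel'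
        have h2 := ih _ _ hrest hrest' (fun b hb => hIH b (List.mem_cons_of_mem _ hb))
        rw [h1, h2]

end SnakeAux

open SnakeAux in
theorem orderedSnake_injective (S T : ZFSet) (α : List AB)
    (hS : OSnake S α) (hT : OSnake T α) : S = T := by
  have main : ∀ (n : ℕ) (α : List AB), α.length = n → ∀ S T : ZFSet,
      OSnake S α → OSnake T α → S = T := by
    intro n
    induction n using Nat.strong_induction_on with
    | _ n ih =>
      intro α hlen S T hS hT
      rcases osnake_inv hS with ⟨hα, rfl⟩ | ⟨l, βs, hnel, hf, rfl, hα⟩ <;>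
        rcases osnake_inv hT with ⟨hα', rfl⟩ | ⟨l', βs', hnel', hf', rfl, hα'⟩
      · rfl
      · exfalso
        rw [hα] at hα'
        rcases List.exists_cons_of_ne_nil hnel' with ⟨x, xs, rfl⟩
        simp [List.replicate_succ] at hα'
      · exfalso
        rw [hα'] at hα
        rcases List.exists_cons_of_ne_nil hnel with ⟨x, xs, rfl⟩
        simp [List.replicate_succ] at hα
      · have heq2 : List.replicate l.length AB.b ++ AB.a :: βs.flatten =
            List.replicate l'.length AB.b ++ AB.a :: βs'.flatten := by
          have := hα.symm.trans hα'
          simpa using this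
        obtain ⟨hk, hflat⟩ := replicate_a_inj _ _ _ _ heq2
        have hk1 : 1 ≤ l.length := List.length_pos_iff.2 hnel
        have hβs : βs = βs' := by
          apply flatten_inj
          · exact mem_of_forall₂ hf
          · exact mem_of_forall₂ hf'
          · rw [← hf.length_eq, ← hf'.length_eq, hk]
          · exact hflat
        subst hβs
        have hIH : ∀ β ∈ βs, ∀ S T : ZFSet, OSnake S β → OSnake T β → S = T := by
          intro β hβ S' T' h1 h2
          have hlt : β.length < n := by
            rw [← hlen, hα]
            exact length_lt_of_mem hβ hk1
          exact ih β.length hlt β rfl S' T' h1 h2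
        rw [forall₂_unique βs l l' hf hf' hIH]
  exact main α.length α rfl S T hS hT
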